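/- Each row of a tropical matrix C ∈ T^{k×m} of tropical full rank lies in the tropical linear space of its valuated matroid of maximal minors: for every row r of C and every (k+1)-subset T of [m], the minimum of tdet(C_{T∖i}) + r_i over i ∈ T is attained at least twice or equals ∞, where tdet denotes the tropical determinant and C_J the submatrix with columns J. -/

import Mathlib

/-- The minimum of `f` is attained at least twice, or `f` is identically `∞`. -/
def AAT {ι : Type*} (f : ι → WithTop ℝ) : Prop :=
  (∀ i, f i = ⊤) ∨ ∃ i j, i ≠ j ∧ f i = f j ∧ ∀ l, f i ≤ f l

/-- The tropical determinant (min-plus permanent) of a square tropical matrix. -/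
noncomputable def tropDet {k : ℕ} (N : Matrix (Fin k) (Fin k) (WithTop ℝ)) : WithTop ℝ :=
  Finset.univ.inf fun σ : Equiv.Perm (Fin k) => ∑ i, N i (σ i)

/-- The tropical maximal minor of `C` on the column set `J` (`∞` if `J.card ≠ k`). -/
noncomputable def tropMinor {k m : ℕ}
    (C : Matrix (Fin k) (Fin m) (WithTop ℝ)) (J : Finset (Fin m)) : WithTop ℝ :=
  if h : J.card = k then
    tropDet (C.submatrix id fun a : Fin k => ((J.orderIsoOfFin h) a : Fin m))
  else ⊤

/-! ### Auxiliary machinery -/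

/-- Extend the row index set by one; the new index `0` maps to the distinguished row `r`. -/
def rowExt {k : ℕ} (r : Fin k) : Fin (k + 1) → Fin k :=
  fun x => if h : x = 0 then r else x.pred h

lemma rowExt_zero {k : ℕ} (r : Fin k) : rowExt r 0 = r := by simp [rowExt]

lemma rowExt_succ {k : ℕ} (r : Fin k) (a : Fin k) : rowExt r a.succ = a := by
  simp [rowExt, Fin.succ_ne_zero]

lemma rowExt_swap {k : ℕ} (r : Fin k) (x : Fin (k + 1)) :
    rowExt r (Equiv.swap 0 r.succ x) = rowExt r x := by
  rcases eq_or_ne x 0 with rfl | h0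
  · rw [Equiv.swap_apply_left, rowExt_succ, rowExt_zero]
  · rcases eq_or_ne x r.succ with rfl | hr
    · rw [Equiv.swap_apply_right, rowExt_succ, rowExt_zero]
    · rw [Equiv.swap_apply_of_ne_of_ne h0 hr]

/-- The permutation weight of the `(k+1) × (k+1)` extended matrix whose rows are the rows of `C`
together with a second copy of row `r`, with columns the elements of `T`. -/
noncomputable def Wt {k m : ℕ} (C : Matrix (Fin k) (Fin m) (WithTop ℝ)) (r : Fin k)
    (T : Finset (Fin m)) (hT : T.card = k + 1) (σ : Equiv.Perm (Fin (k + 1))) : WithTop ℝ :=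
  ∑ x, C (rowExt r x) ((T.orderIsoOfFin hT (σ x) : Fin m))

lemma Wt_expand {k m : ℕ} (C : Matrix (Fin k) (Fin m) (WithTop ℝ)) (r : Fin k)
    (T : Finset (Fin m)) (hT : T.card = k + 1) (σ : Equiv.Perm (Fin (k + 1))) :
    Wt C r T hT σ = C r ((T.orderIsoOfFin hT (σ 0) : Fin m)) +
      ∑ x : Fin k, C x ((T.orderIsoOfFin hT (σ x.succ) : Fin m)) := by
  simp [Wt, Fin.sum_univ_succ, rowExt_zero, rowExt_succ]

lemma Wt_swap {k m : ℕ} (C : Matrix (Fin k) (Fin m) (WithTop ℝ)) (r : Fin k)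
    (T : Finset (Fin m)) (hT : T.card = k + 1) (σ : Equiv.Perm (Fin (k + 1))) :
    Wt C r T hT ((Equiv.swap (0 : Fin (k + 1)) r.succ).trans σ) = Wt C r T hT σ := by
  unfold Wt
  calc ∑ x, C (rowExt r x)
        ((T.orderIsoOfFin hT (((Equiv.swap (0 : Fin (k + 1)) r.succ).trans σ) x) : Fin m))
      = ∑ x, (fun y => C (rowExt r y) ((T.orderIsoOfFin hT (σ y) : Fin m)))
          ((Equiv.swap (0 : Fin (k + 1)) r.succ) x) := by
        refine Finset.sum_congr rfl fun x _ => ?_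
        show C (rowExt r x) _ =
          C (rowExt r ((Equiv.swap (0 : Fin (k + 1)) r.succ) x))
            ((T.orderIsoOfFin hT (σ ((Equiv.swap (0 : Fin (k + 1)) r.succ) x)) : Fin m))
        rw [rowExt_swap]
        rfl
    _ = ∑ y, C (rowExt r y) ((T.orderIsoOfFin hT (σ y) : Fin m)) :=
        Equiv.sum_comp (Equiv.swap (0 : Fin (k + 1)) r.succ)
          (fun y => C (rowExt r y) ((T.orderIsoOfFin hT (σ y) : Fin m)))

lemma tropMinor_eq {k m : ℕ} (C : Matrix (Fin k) (Fin m) (WithTop ℝ)) (J : Finset (Fin m))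
    (h : J.card = k) :
    tropMinor C J =
      Finset.univ.inf fun π : Equiv.Perm (Fin k) =>
        ∑ x, C x ((J.orderIsoOfFin h (π x) : Fin m)) := by
  rw [tropMinor, dif_pos h]
  rfl

lemma erase_card_aux {k m : ℕ} {T : Finset (Fin m)} (hT : T.card = k + 1) {i : Fin m}
    (hi : i ∈ T) : (T.erase i).card = k := by
  rw [Finset.card_erase_of_mem hi, hT]
  omega

/-- Every permutation of the extended matrix weighs at least the Laplace term of the column
it assigns to the extra row. -/
lemma lemA {k m : ℕ} (C : Matrix (Fin k) (Fin m) (WithTop ℝ)) (r : Fin k)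
    (T : Finset (Fin m)) (hT : T.card = k + 1) (σ : Equiv.Perm (Fin (k + 1))) :
    tropMinor C (T.erase (T.orderIsoOfFin hT (σ 0) : Fin m)) +
      C r (T.orderIsoOfFin hT (σ 0) : Fin m) ≤ Wt C r T hT σ := by
  classical
  set i : Fin m := (T.orderIsoOfFin hT (σ 0) : Fin m) with hidef
  have hi : i ∈ T := (T.orderIsoOfFin hT (σ 0)).2
  have hcard : (T.erase i).card = k := erase_card_aux hT hi
  set e : Fin k → Fin m := fun x => (T.orderIsoOfFin hT (σ x.succ) : Fin m) with hedef
  have he : ∀ x, e x ∈ T.erase i := by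
    intro x
    refine Finset.mem_erase.mpr ⟨?_, (T.orderIsoOfFin hT (σ x.succ)).2⟩
    intro hcontra
    have h1 : T.orderIsoOfFin hT (σ x.succ) = T.orderIsoOfFin hT (σ 0) :=
      Subtype.ext hcontra
    have h2 : σ x.succ = σ 0 := (T.orderIsoOfFin hT).injective h1
    exact Fin.succ_ne_zero x (σ.injective h2)
  have heinj : Function.Injective e := by
    intro x y hxy
    have h1 : σ x.succ = σ y.succ :=
      (T.orderIsoOfFin hT).injective (Subtype.ext hxy)
    exact Fin.succ_injective _ (σ.injective h1)
  set π : Fin k → Fin k :=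
    fun x => ((T.erase i).orderIsoOfFin hcard).symm ⟨e x, he x⟩ with hπdef
  have hπinj : Function.Injective π := by
    intro x y hxy
    have h1 : (⟨e x, he x⟩ : {a // a ∈ T.erase i}) = ⟨e y, he y⟩ :=
      ((T.erase i).orderIsoOfFin hcard).symm.injective hxy
    exact heinj (Subtype.mk_eq_mk.mp h1)
  set πe : Equiv.Perm (Fin k) :=
    Equiv.ofBijective π (Finite.injective_iff_bijective.mp hπinj) with hπedef
  have hval : ∀ x, ((T.erase i).orderIsoOfFin hcard (πe x) : Fin m) = e x := by
    intro x
    have : (T.erase i).orderIsoOfFin hcard (πe x) = ⟨e x, he x⟩ := by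
      show (T.erase i).orderIsoOfFin hcard
        (((T.erase i).orderIsoOfFin hcard).symm ⟨e x, he x⟩) = _
      exact ((T.erase i).orderIsoOfFin hcard).apply_symm_apply _
    rw [this]
  rw [tropMinor_eq C (T.erase i) hcard, Wt_expand]
  have hle : (Finset.univ.inf fun π' : Equiv.Perm (Fin k) =>
      ∑ x, C x (((T.erase i).orderIsoOfFin hcard (π' x) : Fin m))) ≤
      ∑ x, C x (e x) := by
    have := Finset.inf_le (Finset.mem_univ πe) (f := fun π' : Equiv.Perm (Fin k) =>
      ∑ x, C x (((T.erase i).orderIsoOfFin hcard (π' x) : Fin m)))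
    refine le_trans this (le_of_eq ?_)
    exact Finset.sum_congr rfl fun x _ => by rw [hval]
  calc (Finset.univ.inf fun π' : Equiv.Perm (Fin k) =>
          ∑ x, C x (((T.erase i).orderIsoOfFin hcard (π' x) : Fin m))) + C r i
      ≤ (∑ x, C x (e x)) + C r i := add_le_add_left hle _
    _ = C r i + ∑ x, C x (e x) := add_comm _ _

/-- Each Laplace term is achieved by some permutation of the extended matrix. -/
lemma lemB {k m : ℕ} (C : Matrix (Fin k) (Fin m) (WithTop ℝ)) (r : Fin k)
    (T : Finset (Fin m)) (hT : T.card = k + 1) (i : Fin m) (hi : i ∈ T) :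
    ∃ σ : Equiv.Perm (Fin (k + 1)), (T.orderIsoOfFin hT (σ 0) : Fin m) = i ∧
      Wt C r T hT σ ≤ tropMinor C (T.erase i) + C r i := by
  classical
  have hcard : (T.erase i).card = k := erase_card_aux hT hi
  obtain ⟨π, -, hπ⟩ := Finset.exists_mem_eq_inf (Finset.univ : Finset (Equiv.Perm (Fin k)))
    Finset.univ_nonempty
    (fun π : Equiv.Perm (Fin k) => ∑ x, C x (((T.erase i).orderIsoOfFin hcard (π x) : Fin m)))
  set b₀ : Fin (k + 1) := (T.orderIsoOfFin hT).symm ⟨i, hi⟩ with hb₀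
  have hmemT : ∀ a : Fin k, ((T.erase i).orderIsoOfFin hcard (π a) : Fin m) ∈ T :=
    fun a => Finset.mem_of_mem_erase ((T.erase i).orderIsoOfFin hcard (π a)).2
  have hneI : ∀ a : Fin k, ((T.erase i).orderIsoOfFin hcard (π a) : Fin m) ≠ i :=
    fun a => (Finset.mem_erase.mp ((T.erase i).orderIsoOfFin hcard (π a)).2).1
  set g : Fin (k + 1) → Fin (k + 1) :=
    Fin.cases b₀ (fun a => (T.orderIsoOfFin hT).symm
      ⟨((T.erase i).orderIsoOfFin hcard (π a) : Fin m), hmemT a⟩) with hg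
  have hg0 : g 0 = b₀ := rfl
  have hgs : ∀ a : Fin k, g a.succ = (T.orderIsoOfFin hT).symm
      ⟨((T.erase i).orderIsoOfFin hcard (π a) : Fin m), hmemT a⟩ := fun a => rfl
  have hginj : Function.Injective g := by
    intro a b hab
    rcases Fin.eq_zero_or_eq_succ a with rfl | ⟨a', rfl⟩ <;>
      rcases Fin.eq_zero_or_eq_succ b with rfl | ⟨b', rfl⟩
    · rfl
    · exfalso
      rw [hg0, hgs] at hab
      have h2 : (⟨((T.erase i).orderIsoOfFin hcard (π b') : Fin m), hmemT b'⟩ :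
          {x // x ∈ T}) = ⟨i, hi⟩ := by
        apply (T.orderIsoOfFin hT).symm.injective
        rw [← hab]
      exact hneI b' (congrArg Subtype.val h2)
    · exfalso
      rw [hg0, hgs] at hab
      have h2 : (⟨((T.erase i).orderIsoOfFin hcard (π a') : Fin m), hmemT a'⟩ :
          {x // x ∈ T}) = ⟨i, hi⟩ := by
        apply (T.orderIsoOfFin hT).symm.injective
        rw [hab]
      exact hneI a' (congrArg Subtype.val h2)
    · rw [hgs, hgs] at hab
      have h1 := (T.orderIsoOfFin hT).symm.injective hab
      have h2 : (T.erase i).orderIsoOfFin hcard (π a') =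
          (T.erase i).orderIsoOfFin hcard (π b') :=
        Subtype.ext (Subtype.mk_eq_mk.mp h1)
      have h3 := ((T.erase i).orderIsoOfFin hcard).injective h2
      exact congrArg Fin.succ (π.injective h3)
  set σ : Equiv.Perm (Fin (k + 1)) :=
    Equiv.ofBijective g (Finite.injective_iff_bijective.mp hginj) with hσ
  have hσ0 : σ 0 = b₀ := hg0
  have hcol0 : (T.orderIsoOfFin hT (σ 0) : Fin m) = i := by
    rw [hσ0, hb₀, (T.orderIsoOfFin hT).apply_symm_apply]
  refine ⟨σ, hcol0, ?_⟩
  rw [Wt_expand, hcol0, tropMinor_eq C (T.erase i) hcard, hπ]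
  have hterm : ∀ x : Fin k, (T.orderIsoOfFin hT (σ x.succ) : Fin m) =
      ((T.erase i).orderIsoOfFin hcard (π x) : Fin m) := by
    intro x
    have : σ x.succ = g x.succ := rfl
    rw [this, hgs, (T.orderIsoOfFin hT).apply_symm_apply]
  rw [Finset.sum_congr rfl fun x _ => by rw [hterm x]]
  exact le_of_eq (add_comm _ _)

theorem row_in_tropical_linear_space {k m : ℕ}
    (C : Matrix (Fin k) (Fin m) (WithTop ℝ))
    (hfull : ∃ J : Finset (Fin m), tropMinor C J ≠ ⊤) :
    ∀ r : Fin k, ∀ T : Finset (Fin m), T.card = k + 1 →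
      AAT (fun i : {i : Fin m // i ∈ T} =>
        tropMinor C (T.erase (i : Fin m)) + C r (i : Fin m)) := by
  intro r T hT
  classical
  set f : {i : Fin m // i ∈ T} → WithTop ℝ :=
    fun i => tropMinor C (T.erase (i : Fin m)) + C r (i : Fin m) with hf
  by_cases hall : ∀ i, f i = ⊤
  · exact Or.inl hall
  right
  have hTne : T.Nonempty := Finset.card_pos.mp (by rw [hT]; exact Nat.succ_pos k)
  have hne : Nonempty {i : Fin m // i ∈ T} := ⟨⟨hTne.choose, hTne.choose_spec⟩⟩
  obtain ⟨i₀, hmin⟩ := Finite.exists_min f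
  obtain ⟨σ, hσ0, hσle⟩ := lemB C r T hT i₀.1 i₀.2
  set σ' : Equiv.Perm (Fin (k + 1)) := (Equiv.swap (0 : Fin (k + 1)) r.succ).trans σ with hσ'
  have hW : Wt C r T hT σ' = Wt C r T hT σ := Wt_swap C r T hT σ
  have hA := lemA C r T hT σ'
  set j : {i : Fin m // i ∈ T} :=
    ⟨(T.orderIsoOfFin hT (σ' 0) : Fin m), (T.orderIsoOfFin hT (σ' 0)).2⟩ with hj
  have hσ'0 : σ' 0 = σ r.succ := by
    rw [hσ', Equiv.trans_apply, Equiv.swap_apply_left]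
  have hjne : i₀ ≠ j := by
    intro hcontra
    have h1 : (T.orderIsoOfFin hT (σ' 0) : Fin m) = i₀.1 := by
      rw [hcontra]
    rw [← hσ0] at h1
    have h2 : T.orderIsoOfFin hT (σ' 0) = T.orderIsoOfFin hT (σ 0) := Subtype.ext h1
    have h3 : σ' 0 = σ 0 := (T.orderIsoOfFin hT).injective h2
    rw [hσ'0] at h3
    exact Fin.succ_ne_zero r (σ.injective h3)
  have hfj : f j ≤ f i₀ := by
    have h1 : f j ≤ Wt C r T hT σ' := hA
    have h2 : Wt C r T hT σ ≤ f i₀ := by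
      rw [hf]
      simpa using hσle
    rw [hW] at h1
    exact le_trans h1 h2
  exact ⟨i₀, j, hjne, le_antisymm (hmin j) hfj, hmin⟩
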